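/- Let n ≥ 2 and let i ≠ j in {1,...,n}. The matrix σ_{ij} = E_{ii}⊗E_{ii} + E_{jj}⊗E_{jj} + E_{ii}⊗E_{jj} + E_{jj}⊗E_{ii} - E_{ij}⊗E_{ij} - E_{ji}⊗E_{ji} ∈ M_n ⊗ M_n is separable, i.e., it is a finite sum of tensor products B ⊗ C with B, C positive semidefinite matrices in M_n. -/

import Mathlib

set_option maxHeartbeats 2000000

open Finset Matrix
open scoped Kronecker ComplexOrder

/-- The `n × n` matrix units. -/
def En (n : ℕ) (i j : Fin n) : Matrix (Fin n) (Fin n) ℂ := Matrix.single i j 1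

lemma vecMulVec_star_posSemidef {n : ℕ} (v : Fin n → ℂ) :
    (Matrix.vecMulVec v (star v)).PosSemidef := by
  rw [Matrix.vecMulVec_eq Unit, ← Matrix.conjTranspose_replicateCol]
  exact Matrix.posSemidef_self_mul_conjTranspose _

theorem stmt15 (n : ℕ) (hn : 2 ≤ n) (i j : Fin n) (hij : i ≠ j) :
    ∃ (k : ℕ) (B C : Fin k → Matrix (Fin n) (Fin n) ℂ),
      (∀ t, (B t).PosSemidef) ∧ (∀ t, (C t).PosSemidef) ∧
      En n i i ⊗ₖ En n i i + En n j j ⊗ₖ En n j j + En n i i ⊗ₖ En n j j +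
          En n j j ⊗ₖ En n i i - En n i j ⊗ₖ En n i j - En n j i ⊗ₖ En n j i =
        ∑ t, B t ⊗ₖ C t := by
  set u : Fin 4 → Fin n → ℂ := fun t k =>
    if k = i then 1 else if k = j then Complex.I ^ (t : ℕ) else 0 with hu
  set z : Fin 4 → Fin n → ℂ := fun t k =>
    if k = i then 1/2 else if k = j then -(starRingEnd ℂ (Complex.I ^ (t : ℕ))) / 2 else 0 with hz
  refine ⟨4, fun t => Matrix.vecMulVec (u t) (star (u t)),
    fun t => Matrix.vecMulVec (z t) (star (z t)),
    fun t => vecMulVec_star_posSemidef _, fun t => vecMulVec_star_posSemidef _, ?_⟩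
  have hji : j ≠ i := hij.symm
  have tri : ∀ k : Fin n, k = i ∨ k = j ∨ (k ≠ i ∧ k ≠ j) := by
    intro k
    by_cases h1 : k = i
    · exact Or.inl h1
    by_cases h2 : k = j
    · exact Or.inr (Or.inl h2)
    exact Or.inr (Or.inr ⟨h1, h2⟩)
  ext ⟨a, c⟩ ⟨b, d⟩
  simp only [Finset.sum_apply, Matrix.sum_apply, Matrix.kroneckerMap_apply, En,
    Matrix.single, Matrix.of_apply, Matrix.vecMulVec_apply, Pi.star_apply,
    Matrix.add_apply, Matrix.sub_apply, Fin.sum_univ_four, hu, hz]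
  rcases tri a with rfl | rfl | ⟨ha1, ha2⟩ <;>
    rcases tri b with rfl | rfl | ⟨hb1, hb2⟩ <;>
    rcases tri c with rfl | rfl | ⟨hc1, hc2⟩ <;>
    rcases tri d with rfl | rfl | ⟨hd1, hd2⟩ <;>
    simp_all [Fin.isValue, Fin.val_zero, Fin.val_one, Fin.val_two,
      show ((3 : Fin 4) : ℕ) = 3 from rfl, Complex.ext_iff, pow_succ, Complex.I_sq] <;>
    first
      | tauto
      | (simp_all [eq_comm] <;> first | tauto | (ring_nf <;> norm_num [Complex.ext_iff]))
      | (ring_nf <;> norm_num [Complex.ext_iff])
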